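/- Let H(z) = (z + R) exp(∫_{-R}^{R} ξ(t)/(t - z) dt) with ξ measurable, 0 ≤ ξ ≤ 1. Then H is a Herglotz function: it is holomorphic on the upper half plane ℂ₊ and maps ℂ₊ into ℂ₊. -/

import Mathlib

open MeasureTheory Complex

lemma aux_ne (t : ℝ) (z : ℂ) (hz : 0 < z.im) : (t : ℂ) - z ≠ 0 := by
  intro h
  have h2 : ((t:ℂ) - z).im = 0 := by rw [h]; simp
  simp [Complex.sub_im] at h2
  linarith

lemma aux_abs_ge (t : ℝ) (z : ℂ) (hz : 0 < z.im) : z.im ≤ ‖(t:ℂ) - z‖ := by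
  have := Complex.abs_im_le_norm ((t:ℂ) - z)
  simp [Complex.sub_im] at this
  calc z.im = |((t:ℂ) - z).im| := by simp [Complex.sub_im, abs_of_pos hz]
  _ ≤ _ := Complex.abs_im_le_norm _

lemma aux_meas (ξ : ℝ → ℝ) (hm : Measurable ξ) (z : ℂ) (hz : 0 < z.im) :
    AEStronglyMeasurable (fun t : ℝ => (ξ t : ℂ) / ((t:ℂ) - z))
      (volume.restrict (Set.uIoc (-R) R)) := by
  apply Measurable.aestronglyMeasurable
  apply Measurable.div
  · exact Complex.measurable_ofReal.comp hm
  · exact (Complex.measurable_ofReal.sub measurable_const)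

lemma aux_intble (R : ℝ) (ξ : ℝ → ℝ) (hm : Measurable ξ) (hξ0 : ∀ t, 0 ≤ ξ t)
    (hξ1 : ∀ t, ξ t ≤ 1) (z : ℂ) (hz : 0 < z.im) :
    IntervalIntegrable (fun t : ℝ => (ξ t : ℂ) / ((t:ℂ) - z)) volume (-R) R := by
  rw [intervalIntegrable_iff]
  apply Integrable.mono' (g := fun _ : ℝ => z.im⁻¹) (integrableOn_const measure_Ioc_lt_top.ne)
  · exact aux_meas ξ hm z hz
  · filter_upwards with t
    rw [norm_div]
    have h1 : ‖((ξ t : ℝ) : ℂ)‖ ≤ 1 := by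
      rw [Complex.norm_real, Real.norm_eq_abs, _root_.abs_of_nonneg (hξ0 t)]; exact hξ1 t
    have h2 : z.im ≤ ‖(t:ℂ) - z‖ := aux_abs_ge t z hz
    have h3 : (0:ℝ) < ‖(t:ℂ) - z‖ := lt_of_lt_of_le hz h2
    rw [div_le_iff₀ h3]
    calc ‖((ξ t:ℝ):ℂ)‖ ≤ 1 := h1
    _ = z.im⁻¹ * z.im := by field_simp
    _ ≤ z.im⁻¹ * ‖(t:ℂ) - z‖ := by gcongr

lemma aux_deriv (R : ℝ) (ξ : ℝ → ℝ) (hm : Measurable ξ) (hξ0 : ∀ t, 0 ≤ ξ t)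
    (hξ1 : ∀ t, ξ t ≤ 1) (z₀ : ℂ) (hz : 0 < z₀.im) :
    HasDerivAt (fun z => ∫ t in (-R)..R, (ξ t : ℂ) / ((t:ℂ) - z))
      (∫ t in (-R)..R, (ξ t : ℂ) / ((t:ℂ) - z₀)^2) z₀ := by
  have hε : 0 < z₀.im / 2 := by linarith
  have hball : ∀ z ∈ Metric.ball z₀ (z₀.im/2), z₀.im / 2 ≤ z.im := by
    intro z hz'
    have h1 : |z.im - z₀.im| ≤ ‖z - z₀‖ := by
      have := Complex.abs_im_le_norm (z - z₀); simpa [Complex.sub_im] using this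
    have h2 : ‖z - z₀‖ < z₀.im / 2 := by
      rwa [Metric.mem_ball, Complex.dist_eq] at hz'
    have := abs_lt.1 (lt_of_le_of_lt h1 h2)
    linarith [this.1]
  have key := intervalIntegral.hasDerivAt_integral_of_dominated_loc_of_deriv_le
    (F := fun z t => (ξ t : ℂ) / ((t:ℂ) - z))
    (F' := fun z t => (ξ t : ℂ) / ((t:ℂ) - z)^2)
    (bound := fun _ : ℝ => (2 / z₀.im)^2)
    (a := -R) (b := R) (μ := volume) (x₀ := z₀) (Metric.ball_mem_nhds z₀ hε)
    ?_ (aux_intble R ξ hm hξ0 hξ1 z₀ hz) ?_ ?_ ?_ ?_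
  · exact key.2
  · -- hF_meas
    filter_upwards [IsOpen.mem_nhds (isOpen_lt continuous_const Complex.continuous_im) hz] with z hz'
    exact aux_meas ξ hm z hz'
  · -- hF'_meas
    apply Measurable.aestronglyMeasurable
    exact (Complex.measurable_ofReal.comp hm).div
      (((Complex.measurable_ofReal.sub measurable_const)).pow measurable_const)
  · -- h_bound
    filter_upwards with t _ z hz'
    have him : 0 < z.im := lt_of_lt_of_le hε (hball z hz')
    have h2 : z₀.im / 2 ≤ ‖(t:ℂ) - z‖ := le_trans (hball z hz') (aux_abs_ge t z him)
    have h3 : (0:ℝ) < ‖(t:ℂ) - z‖ := lt_of_lt_of_le hε h2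
    rw [norm_div, norm_pow]
    have h1 : ‖((ξ t : ℝ) : ℂ)‖ ≤ 1 := by
      rw [Complex.norm_real, Real.norm_eq_abs, _root_.abs_of_nonneg (hξ0 t)]; exact hξ1 t
    rw [div_le_iff₀ (by positivity)]
    calc ‖((ξ t:ℝ):ℂ)‖ ≤ 1 := h1
    _ ≤ (2/z₀.im)^2 * (z₀.im/2)^2 := by
        rw [div_pow, div_pow, div_mul_div_comm]
        rw [le_div_iff₀ (by positivity)]
        ring_nf
        rfl
    _ ≤ (2/z₀.im)^2 * ‖(t:ℂ) - z‖^2 := by gcongr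
  · -- bound integrable
    exact intervalIntegrable_const
  · -- h_diff
    filter_upwards with t _ z hz'
    have him : 0 < z.im := lt_of_lt_of_le hε (hball z hz')
    have hne : (t:ℂ) - z ≠ 0 := aux_ne t z him
    have hd : HasDerivAt (fun z : ℂ => ((t:ℂ) - z)⁻¹) (((t:ℂ) - z)^2)⁻¹ z := by
      have h1 : HasDerivAt (fun z : ℂ => (t:ℂ) - z) (-1) z := (hasDerivAt_id z).const_sub _
      have := h1.inv hne
      convert this using 1
      all_goals try rfl
      field_simp
    have := hd.const_mul ((ξ t : ℝ) : ℂ)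
    convert this using 1
    all_goals try rfl
    all_goals simp [div_eq_mul_inv]

lemma aux_im_integrand (ξ : ℝ → ℝ) (t : ℝ) (z : ℂ) :
    ((ξ t : ℂ) / ((t:ℂ) - z)).im = ξ t * (z.im / ((t - z.re)^2 + z.im^2)) := by
  rw [Complex.div_im]
  simp [Complex.normSq_apply, Complex.sub_re, Complex.sub_im]
  ring

lemma aux_im_eq (R : ℝ) (hR : 0 < R) (ξ : ℝ → ℝ) (hm : Measurable ξ) (hξ0 : ∀ t, 0 ≤ ξ t)
    (hξ1 : ∀ t, ξ t ≤ 1) (z : ℂ) (hz : 0 < z.im) :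
    (∫ t in (-R)..R, (ξ t : ℂ) / ((t:ℂ) - z)).im
      = ∫ t in (-R)..R, ξ t * (z.im / ((t - z.re)^2 + z.im^2)) := by
  have hRR : (-R : ℝ) ≤ R := by linarith
  have hint := aux_intble R ξ hm hξ0 hξ1 z hz
  rw [intervalIntegrable_iff, Set.uIoc_of_le hRR] at hint
  have him := integral_im hint
  simp only [RCLike.im_to_complex] at him
  rw [intervalIntegral.integral_of_le hRR, intervalIntegral.integral_of_le hRR, ← him]
  apply setIntegral_congr_fun measurableSet_Ioc
  intro t _
  exact aux_im_integrand ξ t z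

lemma aux_poisson_deriv (x y t : ℝ) (hy : 0 < y) :
    HasDerivAt (fun t => Real.arctan ((t - x)/y)) (y / ((t - x)^2 + y^2)) t := by
  have h1 : HasDerivAt (fun t : ℝ => (t - x)/y) (1/y) t := by
    simpa using ((hasDerivAt_id t).sub_const x).div_const y
  have h2 := (Real.hasDerivAt_arctan ((t - x)/y)).comp t h1
  convert h2 using 1
  all_goals try rfl
  rw [div_pow]
  field_simp
  ring

lemma aux_poisson_integral (R x y : ℝ) (hy : 0 < y) :
    ∫ t in (-R)..R, y / ((t - x)^2 + y^2)
      = Real.arctan ((R - x)/y) + Real.arctan ((x + R)/y) := by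
  have hcont : ∀ t ∈ Set.uIcc (-R) R, ContinuousAt (fun t : ℝ => y / ((t - x)^2 + y^2)) t := by
    intro t _
    apply ContinuousAt.div continuousAt_const (by fun_prop)
    positivity
  have := intervalIntegral.integral_eq_sub_of_hasDerivAt
    (f := fun t => Real.arctan ((t - x)/y)) (fun t _ => aux_poisson_deriv x y t hy)
    (ContinuousOn.intervalIntegrable (fun t ht => (hcont t ht).continuousWithinAt))
  rw [this]
  rw [show (-R - x)/y = -((x+R)/y) by ring, Real.arctan_neg]
  ring

lemma aux_theta_bounds (R : ℝ) (hR : 0 < R) (ξ : ℝ → ℝ) (hm : Measurable ξ)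
    (hξ0 : ∀ t, 0 ≤ ξ t) (hξ1 : ∀ t, ξ t ≤ 1) (z : ℂ) (hz : 0 < z.im) :
    0 ≤ (∫ t in (-R)..R, (ξ t : ℂ) / ((t:ℂ) - z)).im ∧
    (∫ t in (-R)..R, (ξ t : ℂ) / ((t:ℂ) - z)).im
      ≤ Real.arctan ((R - z.re)/z.im) + Real.arctan ((z.re + R)/z.im) := by
  have hRR : (-R : ℝ) ≤ R := by linarith
  rw [aux_im_eq R hR ξ hm hξ0 hξ1 z hz]
  have hgpos : ∀ t : ℝ, 0 ≤ z.im / ((t - z.re)^2 + z.im^2) := fun t => by positivity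
  have hgcont : Continuous (fun t : ℝ => z.im / ((t - z.re)^2 + z.im^2)) := by
    apply Continuous.div continuous_const (by fun_prop)
    intro t; positivity
  have hg_int : IntervalIntegrable (fun t : ℝ => z.im / ((t - z.re)^2 + z.im^2))
      volume (-R) R := hgcont.intervalIntegrable _ _
  have hf_int : IntervalIntegrable (fun t : ℝ => ξ t * (z.im / ((t - z.re)^2 + z.im^2)))
      volume (-R) R := by
    have h1 := aux_intble R ξ hm hξ0 hξ1 z hz
    rw [intervalIntegrable_iff] at h1 ⊢
    have h2 := h1.im
    simp only [RCLike.im_to_complex] at h2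
    apply h2.congr
    filter_upwards with t
    exact aux_im_integrand ξ t z
  constructor
  · apply intervalIntegral.integral_nonneg hRR
    intro t _
    exact mul_nonneg (hξ0 t) (hgpos t)
  · rw [← aux_poisson_integral R z.re z.im hz]
    apply intervalIntegral.integral_mono_on hRR hf_int hg_int
    intro t _
    calc ξ t * (z.im / ((t - z.re)^2 + z.im^2)) ≤ 1 * (z.im / ((t - z.re)^2 + z.im^2)) :=
      mul_le_mul_of_nonneg_right (hξ1 t) (hgpos t)
    _ = z.im / ((t - z.re)^2 + z.im^2) := one_mul _

/-- `H(z) = (z+R)exp(∫_{-R}^R ξ(t)/(t-z) dt)` with `ξ` measurable,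
`0 ≤ ξ ≤ 1`, is a Herglotz function: holomorphic on the upper half plane, mapping it
into itself. -/
theorem stmt_16 (R : ℝ) (hR : 0 < R) (ξ : ℝ → ℝ) (hm : Measurable ξ)
    (hξ0 : ∀ t, 0 ≤ ξ t) (hξ1 : ∀ t, ξ t ≤ 1)
    (H : ℂ → ℂ)
    (hH : ∀ z : ℂ, H z = (z + (R : ℂ)) *
      Complex.exp (∫ t in (-R)..R, ((ξ t : ℂ)) / ((t : ℂ) - z))) :
    DifferentiableOn ℂ H {z : ℂ | 0 < z.im} ∧
    ∀ z : ℂ, 0 < z.im → 0 < (H z).im := by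
  have hHfun : H = fun z => (z + (R : ℂ)) *
      Complex.exp (∫ t in (-R)..R, ((ξ t : ℂ)) / ((t : ℂ) - z)) := funext hH
  constructor
  · rw [hHfun]
    intro z hz
    apply DifferentiableAt.differentiableWithinAt
    apply DifferentiableAt.mul
    · exact (differentiableAt_id.add_const _)
    · exact ((aux_deriv R ξ hm hξ0 hξ1 z hz).differentiableAt).cexp
  · intro z hz
    rw [hH z]
    set I := ∫ t in (-R)..R, ((ξ t : ℂ)) / ((t : ℂ) - z) with hI
    set θ := I.im
    set y := z.im
    set x := z.re
    set a := x + R with ha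
    obtain ⟨hθ0, hθ1⟩ := aux_theta_bounds R hR ξ hm hξ0 hξ1 z hz
    set β := Real.arctan (a/y) with hβ
    set γ := Real.arctan ((R - x)/y) with hγ
    have hcosβ : 0 < Real.cos β := Real.cos_arctan_pos _
    have him : ((z + (R:ℂ)) * Complex.exp I).im
        = Real.exp I.re * (a * Real.sin θ + y * Real.cos θ) := by
      rw [Complex.mul_im, Complex.exp_im, Complex.exp_re, Complex.add_re, Complex.add_im,
        Complex.ofReal_re, Complex.ofReal_im, add_zero]
      ring
    rw [him]
    have haeq : a = y * Real.tan β := by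
      rw [hβ, Real.tan_arctan]
      field_simp
    have key : a * Real.sin θ + y * Real.cos θ = (y / Real.cos β) * Real.cos (θ - β) := by
      rw [Real.cos_sub, haeq, Real.tan_eq_sin_div_cos]
      field_simp
      ring
    rw [key]
    have hcos : 0 < Real.cos (θ - β) := by
      apply Real.cos_pos_of_mem_Ioo
      constructor
      · have := Real.arctan_lt_pi_div_two (a/y)
        linarith
      · have := Real.arctan_lt_pi_div_two ((R - x)/y)
        linarith
    positivity
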